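/- Let W be a nonnegative random variable whose Laplace transform χ(λ) = E[e^{-λW}] satisfies χ''(λ) ∼ 1/λ as λ → 0+. Then V_2(x) := E[W² 1_{W ≤ x}] ∼ x as x → ∞, and consequently P(W > x) ∼ 1/x as x → ∞. -/

import Mathlib

open Real MeasureTheory Filter Topology

lemma texp_le (t b : ℝ) (ht : 0 ≤ t) (hb : 0 < b) : t * Real.exp (-(b*t)) ≤ 1 / b := by
  rw [Real.exp_neg, mul_comm, inv_mul_le_iff₀ (Real.exp_pos _)]
  have h1 : b * t ≤ Real.exp (b*t) :=
    le_trans (le_add_of_nonneg_right one_pos.le) (Real.add_one_le_exp _)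
  rw [← sub_nonneg]
  have : Real.exp (b*t) * (1/b) - t = (Real.exp (b*t) - b*t) / b := by field_simp
  rw [this]
  have := sub_nonneg.2 h1
  positivity

lemma t2exp_le (t b : ℝ) (ht : 0 ≤ t) (hb : 0 < b) : t^2 * Real.exp (-(b*t)) ≤ 4 / b^2 := by
  have h := texp_le t (b/2) ht (by positivity)
  have heq : t^2 * Real.exp (-(b*t)) = (t * Real.exp (-(b/2*t)))^2 := by
    rw [mul_pow, ← Real.exp_nat_mul]
    ring_nf
  rw [heq]
  have hnn : 0 ≤ t * Real.exp (-(b/2*t)) := by positivity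
  calc (t * Real.exp (-(b/2*t)))^2 ≤ (1/(b/2))^2 := by gcongr
  _ = 4 / b^2 := by rw [div_pow, div_pow]; norm_num

section Tauberian
variable {Ω : Type*} [MeasurableSpace Ω] (P : Measure Ω) [IsProbabilityMeasure P]
  (W : Ω → ℝ) (hW : Measurable W) (hWnonneg : ∀ ω, 0 ≤ W ω)

include hW hWnonneg in
lemma int_exp (l : ℝ) (hl : 0 < l) :
    Integrable (fun ω => Real.exp (-(l * W ω))) P := by
  apply Integrable.mono' (integrable_const (1:ℝ))
    ((hW.const_mul l).neg.exp.aestronglyMeasurable)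
  filter_upwards with ω
  show ‖Real.exp (-(l * W ω))‖ ≤ 1
  rw [Real.norm_eq_abs, abs_of_pos (Real.exp_pos _)]
  exact Real.exp_le_one_iff.2 (by nlinarith [hWnonneg ω])

include hW hWnonneg in
lemma int_wexp (l : ℝ) (hl : 0 < l) :
    Integrable (fun ω => W ω * Real.exp (-(l * W ω))) P := by
  apply Integrable.mono' (integrable_const (1/l))
    ((hW.mul (hW.const_mul l).neg.exp).aestronglyMeasurable)
  filter_upwards with ω
  show ‖W ω * Real.exp (-(l * W ω))‖ ≤ 1/l
  rw [Real.norm_eq_abs, abs_of_nonneg (mul_nonneg (hWnonneg ω) (Real.exp_pos _).le)]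
  exact texp_le (W ω) l (hWnonneg ω) hl

include hW hWnonneg in
lemma int_w2exp (l : ℝ) (hl : 0 < l) :
    Integrable (fun ω => (W ω)^2 * Real.exp (-(l * W ω))) P := by
  apply Integrable.mono' (integrable_const (4/l^2))
    (((hW.pow_const 2).mul (hW.const_mul l).neg.exp).aestronglyMeasurable)
  filter_upwards with ω
  show ‖(W ω)^2 * Real.exp (-(l * W ω))‖ ≤ 4/l^2
  rw [Real.norm_eq_abs, abs_of_nonneg (mul_nonneg (sq_nonneg _) (Real.exp_pos _).le)]
  exact t2exp_le (W ω) l (hWnonneg ω) hl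

include hW hWnonneg in
lemma deriv1 (l : ℝ) (hl : 0 < l) :
    HasDerivAt (fun u => ∫ ω, Real.exp (-(u * W ω)) ∂P)
      (∫ ω, -(W ω * Real.exp (-(l * W ω))) ∂P) l := by
  have key := hasDerivAt_integral_of_dominated_loc_of_deriv_le (μ := P)
    (F := fun u ω => Real.exp (-(u * W ω)))
    (F' := fun u ω => -(W ω * Real.exp (-(u * W ω))))
    (bound := fun _ => 2/l) (x₀ := l) (s := Metric.ball l (l/2)) (Metric.ball_mem_nhds l (by positivity))
    ?_ (int_exp P W hW hWnonneg l hl) ?_ ?_ (integrable_const _) ?_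
  · exact key.2
  · filter_upwards with u
    exact ((hW.const_mul u).neg.exp.aestronglyMeasurable)
  · exact (((hW.mul (hW.const_mul l).neg.exp).aestronglyMeasurable).neg)
  · filter_upwards with ω u hu
    rw [Real.norm_eq_abs, abs_neg, abs_of_nonneg (mul_nonneg (hWnonneg ω) (Real.exp_pos _).le)]
    have hu2 : l/2 ≤ u := by
      rw [Metric.mem_ball, Real.dist_eq, abs_lt] at hu; linarith
    calc W ω * Real.exp (-(u * W ω)) ≤ W ω * Real.exp (-(l/2 * W ω)) := by
          apply mul_le_mul_of_nonneg_left _ (hWnonneg ω)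
          apply Real.exp_le_exp.2
          nlinarith [hWnonneg ω]
    _ ≤ 1/(l/2) := texp_le (W ω) (l/2) (hWnonneg ω) (by positivity)
    _ = 2/l := by rw [one_div_div]
  · filter_upwards with ω u hu
    have : HasDerivAt (fun u : ℝ => -(u * W ω)) (-W ω) u := by
      simpa using ((hasDerivAt_id u).mul_const (W ω)).fun_neg
    simpa [mul_comm] using this.exp

include hW hWnonneg in
lemma deriv2 (l : ℝ) (hl : 0 < l) :
    HasDerivAt (fun u => ∫ ω, -(W ω * Real.exp (-(u * W ω))) ∂P)
      (∫ ω, (W ω)^2 * Real.exp (-(l * W ω)) ∂P) l := by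
  have key := hasDerivAt_integral_of_dominated_loc_of_deriv_le (μ := P)
    (F := fun u ω => -(W ω * Real.exp (-(u * W ω))))
    (F' := fun u ω => (W ω)^2 * Real.exp (-(u * W ω)))
    (bound := fun _ => 4/(l/2)^2) (x₀ := l) (s := Metric.ball l (l/2)) (Metric.ball_mem_nhds l (by positivity))
    ?_ (int_wexp P W hW hWnonneg l hl).neg ?_ ?_ (integrable_const _) ?_
  · exact key.2
  · filter_upwards with u
    exact ((hW.mul (hW.const_mul u).neg.exp).aestronglyMeasurable).neg
  · exact (((hW.pow_const 2).mul (hW.const_mul l).neg.exp).aestronglyMeasurable)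
  · filter_upwards with ω u hu
    rw [Real.norm_eq_abs, abs_of_nonneg (mul_nonneg (sq_nonneg _) (Real.exp_pos _).le)]
    have hu2 : l/2 ≤ u := by
      rw [Metric.mem_ball, Real.dist_eq, abs_lt] at hu; linarith
    calc (W ω)^2 * Real.exp (-(u * W ω)) ≤ (W ω)^2 * Real.exp (-(l/2 * W ω)) := by
          apply mul_le_mul_of_nonneg_left _ (by positivity)
          apply Real.exp_le_exp.2
          nlinarith [hWnonneg ω]
    _ ≤ 4/(l/2)^2 := t2exp_le (W ω) (l/2) (hWnonneg ω) (by positivity)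
  · filter_upwards with ω u hu
    have h1 : HasDerivAt (fun u : ℝ => -(u * W ω)) (-W ω) u := by
      simpa using ((hasDerivAt_id u).mul_const (W ω)).fun_neg
    have := ((h1.exp).const_mul (W ω)).fun_neg
    convert this using 1
    ring


include hW hWnonneg in
lemma K1 (hg : Tendsto (fun l => l * ∫ ω, (W ω)^2 * Real.exp (-(l * W ω)) ∂P) (𝓝[>] (0:ℝ)) (𝓝 1))
    (m : ℕ) (hm : 0 < m) :
    Tendsto (fun l => l * ∫ ω, (W ω)^2 * Real.exp (-(((m:ℝ)*l) * W ω)) ∂P) (𝓝[>] (0:ℝ))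
      (𝓝 (1/(m:ℝ))) := by
  have hmr : (0:ℝ) < m := Nat.cast_pos.2 hm
  have hmap : Tendsto (fun l : ℝ => (m:ℝ)*l) (𝓝[>] (0:ℝ)) (𝓝[>] (0:ℝ)) := by
    apply tendsto_nhdsWithin_of_tendsto_nhds_of_eventually_within
    · have := (((continuous_const.mul continuous_id : Continuous fun l : ℝ => (m:ℝ) * l)).tendsto 0).mono_left
        (nhdsWithin_le_nhds (s := Set.Ioi (0:ℝ)))
      simpa [Pi.mul_def] using this
    · filter_upwards [self_mem_nhdsWithin] with l hl
      exact mul_pos hmr hl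
  have h2 := (hg.comp hmap).const_mul (1/(m:ℝ))
  rw [mul_one] at h2
  apply h2.congr
  intro l
  simp only [Function.comp_apply]
  field_simp

include hW hWnonneg in
lemma K2 (hg : Tendsto (fun l => l * ∫ ω, (W ω)^2 * Real.exp (-(l * W ω)) ∂P) (𝓝[>] (0:ℝ)) (𝓝 1))
    (p : Polynomial ℝ) :
    Tendsto (fun l => l * ∫ ω, (W ω)^2 * Real.exp (-(l * W ω)) *
        p.eval (Real.exp (-(l * W ω))) ∂P) (𝓝[>] (0:ℝ))
      (𝓝 (∫ s in (0:ℝ)..1, p.eval s)) := by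
  set n := p.natDegree + 1 with hn
  -- pointwise rewriting of the integrand
  have hpt : ∀ l : ℝ, ∀ ω,
      (W ω)^2 * Real.exp (-(l * W ω)) * p.eval (Real.exp (-(l * W ω)))
      = ∑ m ∈ Finset.range n, p.coeff m * ((W ω)^2 * Real.exp (-((((m:ℝ)+1)*l) * W ω))) := by
    intro l ω
    rw [Polynomial.eval_eq_sum_range, Finset.mul_sum]
    apply Finset.sum_congr rfl
    intro m _
    rw [← Real.exp_nat_mul]
    have hexp : Real.exp (-(l * W ω)) * Real.exp ((m:ℝ) * -(l * W ω))
        = Real.exp (-((((m:ℝ)+1)*l) * W ω)) := by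
      rw [← Real.exp_add]; ring_nf
    rw [← hexp]; ring
  have hint : ∀ l : ℝ, 0 < l → (∫ ω, (W ω)^2 * Real.exp (-(l * W ω)) *
      p.eval (Real.exp (-(l * W ω))) ∂P)
      = ∑ m ∈ Finset.range n, p.coeff m * ∫ ω, (W ω)^2 * Real.exp (-((((m:ℝ)+1)*l) * W ω)) ∂P := by
    intro l hl
    rw [show (fun ω => (W ω)^2 * Real.exp (-(l * W ω)) * p.eval (Real.exp (-(l * W ω))))
        = fun ω => ∑ m ∈ Finset.range n, p.coeff m *
          ((W ω)^2 * Real.exp (-((((m:ℝ)+1)*l) * W ω))) from funext (hpt l)]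
    rw [integral_finset_sum]
    · exact Finset.sum_congr rfl fun m _ => integral_const_mul _ _
    · intro m _
      exact (int_w2exp P W hW hWnonneg (((m:ℝ)+1)*l) (by positivity)).const_mul _
  -- the limit of the sum
  have hlim : Tendsto (fun l => ∑ m ∈ Finset.range n, p.coeff m *
      (l * ∫ ω, (W ω)^2 * Real.exp (-((((m:ℝ)+1)*l) * W ω)) ∂P)) (𝓝[>] (0:ℝ))
      (𝓝 (∑ m ∈ Finset.range n, p.coeff m * (1/((m:ℝ)+1)))) := by
    apply tendsto_finset_sum
    intro m _
    have := (K1 P W hW hWnonneg hg (m+1) (Nat.succ_pos m)).const_mul (p.coeff m)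
    simp only [Nat.cast_add, Nat.cast_one] at this
    exact this
  have heq : (∫ s in (0:ℝ)..1, p.eval s) = ∑ m ∈ Finset.range n, p.coeff m * (1/((m:ℝ)+1)) := by
    rw [show (fun s : ℝ => p.eval s) = fun s : ℝ => ∑ m ∈ Finset.range n, p.coeff m * s^m from
      funext fun s => Polynomial.eval_eq_sum_range _]
    rw [intervalIntegral.integral_finset_sum]
    · apply Finset.sum_congr rfl
      intro m _
      rw [intervalIntegral.integral_const_mul, integral_pow]
      norm_num
    · intro m _
      exact (continuous_const.mul (continuous_pow m)).intervalIntegrable 0 1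
  rw [heq]
  apply hlim.congr'
  filter_upwards [self_mem_nhdsWithin] with l hl
  rw [hint l hl, Finset.mul_sum]
  apply Finset.sum_congr rfl
  intro m _
  ring


include hW hWnonneg in
lemma int_poly (p : Polynomial ℝ) (l : ℝ) (hl : 0 < l) :
    Integrable (fun ω => (W ω)^2 * Real.exp (-(l * W ω)) *
      p.eval (Real.exp (-(l * W ω)))) P := by
  have hpt : ∀ ω, (W ω)^2 * Real.exp (-(l * W ω)) * p.eval (Real.exp (-(l * W ω)))
      = ∑ m ∈ Finset.range (p.natDegree + 1), p.coeff m *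
        ((W ω)^2 * Real.exp (-((((m:ℝ)+1)*l) * W ω))) := by
    intro ω
    rw [Polynomial.eval_eq_sum_range, Finset.mul_sum]
    apply Finset.sum_congr rfl
    intro m _
    rw [← Real.exp_nat_mul]
    have hexp : Real.exp (-(l * W ω)) * Real.exp ((m:ℝ) * -(l * W ω))
        = Real.exp (-((((m:ℝ)+1)*l) * W ω)) := by
      rw [← Real.exp_add]; ring_nf
    rw [← hexp]; ring
  rw [show (fun ω => (W ω)^2 * Real.exp (-(l * W ω)) * p.eval (Real.exp (-(l * W ω))))
    = fun ω => ∑ m ∈ Finset.range (p.natDegree + 1), p.coeff m *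
        ((W ω)^2 * Real.exp (-((((m:ℝ)+1)*l) * W ω))) from funext hpt]
  apply integrable_finset_sum
  intro m _
  exact (int_w2exp P W hW hWnonneg (((m:ℝ)+1)*l) (by positivity)).const_mul _

include hW hWnonneg in
lemma int_ite (x : ℝ) :
    Integrable (fun ω => if W ω ≤ x then (W ω)^2 else 0) P := by
  apply Integrable.mono' (integrable_const (x^2))
    (((hW.pow_const 2).ite (measurableSet_le hW measurable_const)
      measurable_const).aestronglyMeasurable)
  filter_upwards with ω
  rw [Real.norm_eq_abs]
  by_cases h : W ω ≤ x
  · rw [if_pos h, abs_of_nonneg (sq_nonneg _)]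
    nlinarith [hWnonneg ω]
  · rw [if_neg h]; simpa using sq_nonneg x

include hW hWnonneg in
lemma K3 (hg : Tendsto (fun l => l * ∫ ω, (W ω)^2 * Real.exp (-(l * W ω)) ∂P) (𝓝[>] (0:ℝ)) (𝓝 1)) :
    Tendsto (fun l => l * ∫ ω, (if W ω ≤ 1/l then (W ω)^2 else 0) ∂P) (𝓝[>] (0:ℝ)) (𝓝 1) := by
  have ha0 : (0:ℝ) < Real.exp (-1) := Real.exp_pos _
  have ha1 : Real.exp (-1) < 1 := Real.exp_lt_one_iff.2 (by norm_num)
  set a : ℝ := Real.exp (-1) with ha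
  rw [tendsto_order]
  constructor
  · -- lower bound:  c < 1 < eventually
    intro c hc
    have hF : Tendsto (fun d : ℝ => -Real.log (a + d)) (𝓝[>] (0:ℝ)) (𝓝 1) := by
      have h1 : ContinuousAt (fun d : ℝ => -Real.log (a + d)) 0 :=
        ((Real.continuousAt_log (by simpa using ha0.ne')).comp
          ((continuous_const.add continuous_id).continuousAt)).neg
      have := h1.tendsto.mono_left (nhdsWithin_le_nhds (s := Set.Ioi (0:ℝ)))
      simpa [ha, Real.log_exp] using this
    have hev : ∀ᶠ d in 𝓝[>] (0:ℝ), ((1+c)/2 < -Real.log (a + d) ∧ a + d < 1) ∧ 0 < d := by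
      refine ((hF.eventually_const_lt (by linarith)).and ?_).and self_mem_nhdsWithin
      have h3 : Tendsto (fun d : ℝ => a + d) (𝓝[>] (0:ℝ)) (𝓝 a) := by
        have : Tendsto (fun d : ℝ => a + d) (𝓝 (0:ℝ)) (𝓝 (a + 0)) :=
          (continuous_const.add continuous_id).tendsto (0:ℝ)
        rw [add_zero] at this
        exact this.mono_left nhdsWithin_le_nhds
      exact h3.eventually_lt_const ha1
    obtain ⟨δ, ⟨⟨hδlog, hδ1⟩, hδ0⟩⟩ := hev.exists
    set ε' : ℝ := (1-c)/4 with hε'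
    have hε'0 : 0 < ε' := by rw [hε']; linarith
    set φ : ℝ → ℝ := fun s => (min 1 (max 0 ((s - a)/δ))) / max s a with hφ
    have hφcont : Continuous φ := by
      apply Continuous.div
      · exact continuous_const.min (continuous_const.max
          ((continuous_id.sub continuous_const).div_const δ))
      · exact continuous_id.max continuous_const
      · intro s; exact ne_of_gt (lt_max_of_lt_right ha0)
    have hφ_nonneg : ∀ s, 0 ≤ φ s := fun s =>
      div_nonneg (le_min zero_le_one (le_max_left _ _)) (lt_max_of_lt_right ha0).le
    have hφ_le : ∀ s, 0 < s → φ s ≤ 1/s := by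
      intro s hs
      apply div_le_div₀ (by norm_num) (min_le_left _ _) hs (le_max_left _ _)
    have hφ_zero : ∀ s, s < a → φ s = 0 := by
      intro s hs
      have : max 0 ((s - a)/δ) = 0 := max_eq_left (by
        apply div_nonpos_of_nonpos_of_nonneg <;> [linarith; exact hδ0.le])
      rw [hφ]; simp only [this, min_eq_right (by norm_num : (0:ℝ) ≤ 1)]
      exact zero_div _
    have hφ_eq : ∀ s ∈ Set.Icc (a + δ) 1, φ s = 1/s := by
      intro s hs
      have h1 : min 1 (max 0 ((s - a)/δ)) = 1 := by
        apply min_eq_left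
        apply le_max_of_le_right
        rw [le_div_iff₀ hδ0, one_mul]
        linarith [hs.1]
      have h2 : max s a = s := max_eq_left (by linarith [hs.1])
      rw [hφ]; simp only [h1, h2]
    -- Weierstrass
    obtain ⟨p, hp⟩ := exists_polynomial_near_of_continuousOn 0 1 (fun s => φ s - ε')
      ((hφcont.sub continuous_const).continuousOn) ε' hε'0
    have hple : ∀ s ∈ Set.Icc (0:ℝ) 1, p.eval s ≤ φ s := by
      intro s hs
      have := abs_lt.1 (hp s hs)
      linarith [this.2]
    have hpge : ∀ s ∈ Set.Icc (0:ℝ) 1, φ s - 2*ε' ≤ p.eval s := by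
      intro s hs
      have := abs_lt.1 (hp s hs)
      linarith [this.1]
    -- lower bound on ∫₀¹ p
    have hint_poly : ∀ q : Polynomial ℝ, IntervalIntegrable (fun s => q.eval s) volume 0 1 :=
      fun q => (q.continuous).intervalIntegrable 0 1
    have hIab : (0:ℝ) ≤ a + δ := by positivity
    have hIab1 : a + δ ≤ 1 := hδ1.le
    have hsplit : ∫ s in (0:ℝ)..1, φ s
        = (∫ s in (0:ℝ)..(a+δ), φ s) + ∫ s in (a+δ)..1, φ s := by
      rw [intervalIntegral.integral_add_adjacent_intervals] <;>
        exact hφcont.intervalIntegrable _ _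
    have h1 : (0:ℝ) ≤ ∫ s in (0:ℝ)..(a+δ), φ s :=
      intervalIntegral.integral_nonneg hIab (fun s _ => hφ_nonneg s)
    have h2 : ∫ s in (a+δ)..1, φ s = -Real.log (a+δ) := by
      rw [intervalIntegral.integral_congr (g := fun s => 1/s) ?_]
      · rw [integral_one_div ?_]
        · rw [Real.log_div one_ne_zero (by positivity), Real.log_one]; ring
        · intro h
          rw [Set.uIcc_of_le hIab1] at h
          exact absurd h.1 (not_le.2 (by positivity))
      · intro s hs
        rw [Set.uIcc_of_le hIab1] at hs
        exact hφ_eq s hs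
    have hIp : c < ∫ s in (0:ℝ)..1, p.eval s := by
      have hmono : ∫ s in (0:ℝ)..1, (φ s - 2*ε') ≤ ∫ s in (0:ℝ)..1, p.eval s := by
        apply intervalIntegral.integral_mono_on (by norm_num)
          ((hφcont.sub continuous_const).intervalIntegrable 0 1) (hint_poly p)
        intro s hs; exact hpge s hs
      have heq : ∫ s in (0:ℝ)..1, (φ s - 2*ε')
          = (∫ s in (0:ℝ)..1, φ s) - 2*ε' := by
        rw [intervalIntegral.integral_sub (hφcont.intervalIntegrable 0 1)
          (intervalIntegrable_const)]
        simp
      have : -Real.log (a+δ) - 2*ε' ≤ ∫ s in (0:ℝ)..1, p.eval s := by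
        rw [heq, hsplit, h2] at hmono
        linarith
      have hc2 : c < -Real.log (a+δ) - 2*ε' := by
        rw [hε']; linarith
      linarith
    -- eventually
    have hev2 := (K2 P W hW hWnonneg hg p).eventually_const_lt hIp
    filter_upwards [hev2, self_mem_nhdsWithin] with l hl1 hl2
    have hl0 : 0 < l := hl2
    refine lt_of_lt_of_le hl1 ?_
    apply mul_le_mul_of_nonneg_left _ hl0.le
    apply integral_mono (int_poly P W hW hWnonneg p l hl0) (int_ite P W hW hWnonneg (1/l))
    intro ω
    set s : ℝ := Real.exp (-(l * W ω)) with hs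
    have hs0 : 0 < s := Real.exp_pos _
    have hs1 : s ≤ 1 := Real.exp_le_one_iff.2 (by
      simp only [neg_nonpos]
      exact mul_nonneg hl0.le (hWnonneg ω))
    by_cases h : W ω ≤ 1/l
    · simp only [h, if_pos]
      have hps : p.eval s ≤ 1/s := le_trans (hple s ⟨hs0.le, hs1⟩) (hφ_le s hs0)
      have : s * p.eval s ≤ 1 := by
        calc s * p.eval s ≤ s * (1/s) := by
              apply mul_le_mul_of_nonneg_left hps hs0.le
        _ = 1 := by field_simp
      calc (W ω)^2 * s * p.eval s = (W ω)^2 * (s * p.eval s) := by ring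
      _ ≤ (W ω)^2 * 1 := mul_le_mul_of_nonneg_left this (sq_nonneg _)
      _ = (W ω)^2 := mul_one _
    · simp only [h, if_neg, not_false_iff]
      have hlW : 1 < l * W ω := by
        have h' := not_le.1 h
        have := (div_lt_iff₀ hl0).1 h'
        nlinarith
      have hsa : s < a := by
        rw [hs, ha]
        exact Real.exp_lt_exp.2 (by linarith)
      have hphi0 : φ s = 0 := hφ_zero s hsa
      have hps : p.eval s ≤ 0 := by
        rw [← hphi0]; exact hple s ⟨hs0.le, hs1⟩
      have : (W ω)^2 * s * p.eval s ≤ 0 :=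
        mul_nonpos_of_nonneg_of_nonpos (mul_nonneg (sq_nonneg _) hs0.le) hps
      linarith
  · -- upper bound: 1 < c
    intro c hc
    have hF : Tendsto (fun d : ℝ => -Real.log (a - d)) (𝓝[>] (0:ℝ)) (𝓝 1) := by
      have h1 : ContinuousAt (fun d : ℝ => -Real.log (a - d)) 0 :=
        ((Real.continuousAt_log (by simpa using ha0.ne')).comp
          ((continuous_const.sub continuous_id).continuousAt)).neg
      have := h1.tendsto.mono_left (nhdsWithin_le_nhds (s := Set.Ioi (0:ℝ)))
      simpa [ha, Real.log_exp] using this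
    have hev : ∀ᶠ d in 𝓝[>] (0:ℝ), (-Real.log (a - d) < (1+c)/2 ∧ d < a) ∧ 0 < d := by
      refine ((hF.eventually_lt_const (by linarith)).and ?_).and self_mem_nhdsWithin
      have h3 : Tendsto (fun d : ℝ => d) (𝓝[>] (0:ℝ)) (𝓝 0) :=
        tendsto_id.mono_left nhdsWithin_le_nhds
      exact h3.eventually_lt_const ha0
    obtain ⟨δ, ⟨⟨hδlog, hδa⟩, hδ0⟩⟩ := hev.exists
    set ε' : ℝ := (c-1)/4 with hε'
    have hε'0 : 0 < ε' := by rw [hε']; linarith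
    have hb0 : (0:ℝ) < a - δ := by linarith
    set φ : ℝ → ℝ := fun s => (min 1 (max 0 ((s - (a - δ))/δ))) / max s (a - δ) with hφ
    have hφcont : Continuous φ := by
      apply Continuous.div
      · exact continuous_const.min (continuous_const.max
          ((continuous_id.sub continuous_const).div_const δ))
      · exact continuous_id.max continuous_const
      · intro s; exact ne_of_gt (lt_max_of_lt_right hb0)
    have hφ_nonneg : ∀ s, 0 ≤ φ s := fun s =>
      div_nonneg (le_min zero_le_one (le_max_left _ _)) (lt_max_of_lt_right hb0).le
    have hφ_le : ∀ s, 0 < s → φ s ≤ 1/s := by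
      intro s hs
      apply div_le_div₀ (by norm_num) (min_le_left _ _) hs (le_max_left _ _)
    have hφ_zero : ∀ s ∈ Set.Icc (0:ℝ) (a - δ), φ s = 0 := by
      intro s hs
      have : max 0 ((s - (a - δ))/δ) = 0 := max_eq_left (by
        apply div_nonpos_of_nonpos_of_nonneg <;> [linarith [hs.2]; exact hδ0.le])
      rw [hφ]; simp only [this, min_eq_right (by norm_num : (0:ℝ) ≤ 1)]
      exact zero_div _
    have hφ_eq : ∀ s, a ≤ s → φ s = 1/s := by
      intro s hs
      have h1 : min 1 (max 0 ((s - (a - δ))/δ)) = 1 := by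
        apply min_eq_left
        apply le_max_of_le_right
        rw [le_div_iff₀ hδ0, one_mul]
        linarith
      have h2 : max s (a - δ) = s := max_eq_left (by linarith)
      rw [hφ]; simp only [h1, h2]
    -- Weierstrass
    obtain ⟨p, hp⟩ := exists_polynomial_near_of_continuousOn 0 1 (fun s => φ s + ε')
      ((hφcont.add continuous_const).continuousOn) ε' hε'0
    have hpge : ∀ s ∈ Set.Icc (0:ℝ) 1, φ s ≤ p.eval s := by
      intro s hs
      have := abs_lt.1 (hp s hs)
      linarith [this.1]
    have hple : ∀ s ∈ Set.Icc (0:ℝ) 1, p.eval s ≤ φ s + 2*ε' := by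
      intro s hs
      have := abs_lt.1 (hp s hs)
      linarith [this.2]
    have hIab : (0:ℝ) ≤ a - δ := hb0.le
    have hIab1 : a - δ ≤ 1 := by linarith
    have hsplit : ∫ s in (0:ℝ)..1, φ s
        = (∫ s in (0:ℝ)..(a-δ), φ s) + ∫ s in (a-δ)..1, φ s := by
      rw [intervalIntegral.integral_add_adjacent_intervals] <;>
        exact hφcont.intervalIntegrable _ _
    have h1 : (∫ s in (0:ℝ)..(a-δ), φ s) = 0 := by
      rw [intervalIntegral.integral_congr (g := fun _ => (0:ℝ)) ?_]
      · simp
      · intro s hs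
        rw [Set.uIcc_of_le hIab] at hs
        exact hφ_zero s hs
    have h2 : ∫ s in (a-δ)..1, φ s ≤ -Real.log (a-δ) := by
      have hmono : ∫ s in (a-δ)..1, φ s ≤ ∫ s in (a-δ)..1, 1/s := by
        apply intervalIntegral.integral_mono_on hIab1
          (hφcont.intervalIntegrable _ _) ?_ ?_
        · apply ContinuousOn.intervalIntegrable
          apply ContinuousOn.div continuousOn_const continuousOn_id
          intro s hs
          rw [Set.uIcc_of_le hIab1] at hs
          exact ne_of_gt (lt_of_lt_of_le hb0 hs.1)
        · intro s hs
          exact hφ_le s (lt_of_lt_of_le hb0 hs.1)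
      have : ∫ s in (a-δ)..1, (1:ℝ)/s = -Real.log (a-δ) := by
        rw [integral_one_div ?_]
        · rw [Real.log_div one_ne_zero (by positivity), Real.log_one]; ring
        · intro h
          rw [Set.uIcc_of_le hIab1] at h
          exact absurd h.1 (not_le.2 (by positivity))
      linarith
    have hIp : (∫ s in (0:ℝ)..1, p.eval s) < c := by
      have hmono : ∫ s in (0:ℝ)..1, p.eval s ≤ ∫ s in (0:ℝ)..1, (φ s + 2*ε') := by
        apply intervalIntegral.integral_mono_on (by norm_num)
          ((p.continuous).intervalIntegrable 0 1)
          ((hφcont.add continuous_const).intervalIntegrable 0 1)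
        intro s hs; exact hple s hs
      have heq : ∫ s in (0:ℝ)..1, (φ s + 2*ε')
          = (∫ s in (0:ℝ)..1, φ s) + 2*ε' := by
        rw [intervalIntegral.integral_add (hφcont.intervalIntegrable 0 1)
          (intervalIntegrable_const)]
        simp
      have hc2 : -Real.log (a-δ) + 2*ε' < c := by
        rw [hε']; linarith
      rw [heq, hsplit, h1] at hmono
      linarith
    -- eventually
    have hev2 := (K2 P W hW hWnonneg hg p).eventually_lt_const hIp
    filter_upwards [hev2, self_mem_nhdsWithin] with l hl1 hl2
    have hl0 : 0 < l := hl2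
    refine lt_of_le_of_lt ?_ hl1
    apply mul_le_mul_of_nonneg_left _ hl0.le
    apply integral_mono (int_ite P W hW hWnonneg (1/l)) (int_poly P W hW hWnonneg p l hl0)
    intro ω
    set s : ℝ := Real.exp (-(l * W ω)) with hs
    have hs0 : 0 < s := Real.exp_pos _
    have hs1 : s ≤ 1 := Real.exp_le_one_iff.2 (by
      simp only [neg_nonpos]
      exact mul_nonneg hl0.le (hWnonneg ω))
    by_cases h : W ω ≤ 1/l
    · simp only [h, if_pos]
      have hsa : a ≤ s := by
        rw [hs, ha]
        apply Real.exp_le_exp.2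
        rw [neg_le_neg_iff]
        rw [div_eq_mul_inv, one_mul] at h
        calc l * W ω ≤ l * l⁻¹ := mul_le_mul_of_nonneg_left h hl0.le
        _ = 1 := mul_inv_cancel₀ hl0.ne'
      have hps : 1/s ≤ p.eval s := by
        rw [← hφ_eq s hsa]; exact hpge s ⟨hs0.le, hs1⟩
      have : 1 ≤ s * p.eval s := by
        calc (1:ℝ) = s * (1/s) := by field_simp
        _ ≤ s * p.eval s := mul_le_mul_of_nonneg_left hps hs0.le
      calc (W ω)^2 = (W ω)^2 * 1 := (mul_one _).symm
      _ ≤ (W ω)^2 * (s * p.eval s) := mul_le_mul_of_nonneg_left this (sq_nonneg _)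
      _ = (W ω)^2 * s * p.eval s := by ring
    · simp only [h, if_neg, not_false_iff]
      have hps : 0 ≤ p.eval s := le_trans (hφ_nonneg s) (hpge s ⟨hs0.le, hs1⟩)
      exact mul_nonneg (mul_nonneg (sq_nonneg _) hs0.le) hps

include hW hWnonneg in
lemma strip (u v : ℝ) (hu : 0 < u) (huv : u ≤ v) :
    u^2 * ((P {ω | u < W ω}).toReal - (P {ω | v < W ω}).toReal)
      ≤ (∫ ω, (if W ω ≤ v then (W ω)^2 else 0) ∂P)
        - (∫ ω, (if W ω ≤ u then (W ω)^2 else 0) ∂P)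
    ∧ (∫ ω, (if W ω ≤ v then (W ω)^2 else 0) ∂P)
        - (∫ ω, (if W ω ≤ u then (W ω)^2 else 0) ∂P)
      ≤ v^2 * ((P {ω | u < W ω}).toReal - (P {ω | v < W ω}).toReal) := by
  have hmu : MeasurableSet {ω | u < W ω} := measurableSet_lt measurable_const hW
  have hmv : MeasurableSet {ω | v < W ω} := measurableSet_lt measurable_const hW
  have hmS : MeasurableSet {ω | u < W ω ∧ W ω ≤ v} :=
    (measurableSet_lt measurable_const hW).inter (measurableSet_le hW measurable_const)
  -- measure split
  have hunion : {ω | u < W ω} = {ω | u < W ω ∧ W ω ≤ v} ∪ {ω | v < W ω} := by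
    ext ω
    simp only [Set.mem_setOf_eq, Set.mem_union]
    constructor
    · intro h
      rcases le_or_gt (W ω) v with h2 | h2
      · exact Or.inl ⟨h, h2⟩
      · exact Or.inr h2
    · rintro (⟨h, _⟩ | h)
      · exact h
      · linarith
  have hdisj : Disjoint {ω | u < W ω ∧ W ω ≤ v} {ω | v < W ω} := by
    rw [Set.disjoint_left]
    rintro ω ⟨_, h2⟩ h3
    exact absurd h3 (not_lt.2 h2)
  have hsplit : P {ω | u < W ω} = P {ω | u < W ω ∧ W ω ≤ v} + P {ω | v < W ω} := by
    rw [hunion, measure_union hdisj hmv]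
  have hQ : (P {ω | u < W ω}).toReal - (P {ω | v < W ω}).toReal
      = (P {ω | u < W ω ∧ W ω ≤ v}).toReal := by
    rw [hsplit, ENNReal.toReal_add (measure_ne_top P _) (measure_ne_top P _)]
    ring
  -- integral difference
  have hVdiff : (∫ ω, (if W ω ≤ v then (W ω)^2 else 0) ∂P)
      - (∫ ω, (if W ω ≤ u then (W ω)^2 else 0) ∂P)
      = ∫ ω, (if u < W ω ∧ W ω ≤ v then (W ω)^2 else 0) ∂P := by
    rw [← integral_sub (int_ite P W hW hWnonneg v) (int_ite P W hW hWnonneg u)]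
    congr 1
    funext ω
    rcases le_or_gt (W ω) u with h1 | h1
    · rw [if_pos h1, if_pos (le_trans h1 huv), if_neg (by push_neg; intro h; linarith)]
      ring
    · rcases le_or_gt (W ω) v with h2 | h2
      · rw [if_pos h2, if_neg (not_le.2 h1), if_pos ⟨h1, h2⟩]; ring
      · rw [if_neg (not_le.2 h2), if_neg (not_le.2 h1),
          if_neg (by push_neg; intro _; linarith)]; ring
  -- indicator integrals
  have hind : ∀ r : ℝ, (∫ ω, (if u < W ω ∧ W ω ≤ v then r else 0) ∂P)
      = r * (P {ω | u < W ω ∧ W ω ≤ v}).toReal := by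
    intro r
    have : (fun ω => if u < W ω ∧ W ω ≤ v then r else 0)
        = Set.indicator {ω | u < W ω ∧ W ω ≤ v} (fun _ => r) := by
      funext ω
      rw [Set.indicator_apply]
      rfl
    rw [this, integral_indicator_const r hmS, smul_eq_mul, mul_comm]; rfl
  have hint_mid : Integrable (fun ω => if u < W ω ∧ W ω ≤ v then (W ω)^2 else 0) P := by
    apply Integrable.mono' (integrable_const (v^2))
      (((hW.pow_const 2).ite hmS measurable_const).aestronglyMeasurable)
    filter_upwards with ω
    rw [Real.norm_eq_abs]
    by_cases h : u < W ω ∧ W ω ≤ v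
    · rw [if_pos h, abs_of_nonneg (sq_nonneg _)]
      nlinarith [hWnonneg ω, h.1, h.2]
    · rw [if_neg h]
      simpa using sq_nonneg v
  have hint_cu : Integrable (fun ω => if u < W ω ∧ W ω ≤ v then u^2 else 0) P := by
    have : (fun ω => if u < W ω ∧ W ω ≤ v then u^2 else 0)
        = Set.indicator {ω | u < W ω ∧ W ω ≤ v} (fun _ => u^2) := by
      funext ω; rw [Set.indicator_apply]; rfl
    rw [this]
    exact (integrable_const _).indicator hmS
  have hint_cv : Integrable (fun ω => if u < W ω ∧ W ω ≤ v then v^2 else 0) P := by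
    have : (fun ω => if u < W ω ∧ W ω ≤ v then v^2 else 0)
        = Set.indicator {ω | u < W ω ∧ W ω ≤ v} (fun _ => v^2) := by
      funext ω; rw [Set.indicator_apply]; rfl
    rw [this]
    exact (integrable_const _).indicator hmS
  constructor
  · rw [hQ, hVdiff, ← hind (u^2)]
    apply integral_mono hint_cu hint_mid
    intro ω
    dsimp only
    by_cases h : u < W ω ∧ W ω ≤ v
    · rw [if_pos h, if_pos h]
      nlinarith [h.1, hu]
    · rw [if_neg h, if_neg h]
  · rw [hQ, hVdiff, ← hind (v^2)]
    apply integral_mono hint_mid hint_cv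
    intro ω
    dsimp only
    by_cases h : u < W ω ∧ W ω ≤ v
    · rw [if_pos h, if_pos h]
      nlinarith [h.1, h.2, hu]
    · rw [if_neg h, if_neg h]

include hW in
lemma tail_zero : Tendsto (fun y : ℝ => (P {ω | y < W ω}).toReal) atTop (𝓝 0) := by
  have hs : Tendsto (fun n : ℕ => P {ω | (n:ℝ) < W ω}) atTop
      (𝓝 (P (⋂ n : ℕ, {ω | (n:ℝ) < W ω}))) := by
    apply tendsto_measure_iInter_atTop
    · intro n; exact (measurableSet_lt measurable_const hW).nullMeasurableSet
    · intro n m hnm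
      apply Set.setOf_subset_setOf.2
      intro ω h
      exact lt_of_le_of_lt (by exact_mod_cast Nat.cast_le.2 hnm) h
    · exact ⟨0, measure_ne_top P _⟩
  have hempty : (⋂ n : ℕ, {ω | (n:ℝ) < W ω}) = ∅ := by
    rw [Set.eq_empty_iff_forall_notMem]
    intro ω h
    obtain ⟨n, hn⟩ := exists_nat_gt (W ω)
    exact absurd (Set.mem_iInter.1 h n) (not_lt.2 hn.le)
  rw [hempty, measure_empty] at hs
  have hnat : Tendsto (fun n : ℕ => (P {ω | (n:ℝ) < W ω}).toReal) atTop (𝓝 0) := by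
    have := (ENNReal.tendsto_toReal (a := 0) (by simp)).comp hs
    simpa [Function.comp_def] using this
  have h0 : Tendsto (fun _ : ℝ => (0:ℝ)) atTop (𝓝 (0:ℝ)) := tendsto_const_nhds
  apply tendsto_of_tendsto_of_tendsto_of_le_of_le' h0
    (hnat.comp tendsto_nat_floor_atTop)
  · filter_upwards with y using ENNReal.toReal_nonneg
  · filter_upwards [eventually_ge_atTop (0:ℝ)] with y hy
    apply ENNReal.toReal_mono (measure_ne_top P _)
    apply measure_mono
    apply Set.setOf_subset_setOf.2
    intro ω h
    exact lt_of_le_of_lt (Nat.floor_le hy) h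

include hW hWnonneg in
lemma tail_lim
    (hV : Tendsto (fun x => (∫ ω, (if W ω ≤ x then (W ω)^2 else 0) ∂P) / x) atTop (𝓝 1)) :
    Tendsto (fun x => x * (P {ω | x < W ω}).toReal) atTop (𝓝 1) := by
  set V : ℝ → ℝ := fun x => ∫ ω, (if W ω ≤ x then (W ω)^2 else 0) ∂P with hVdef
  set T : ℝ → ℝ := fun x => (P {ω | x < W ω}).toReal with hTdef
  have hT0 : Tendsto T atTop (𝓝 0) := tail_zero P W hW
  have hTnn : ∀ x, 0 ≤ T x := fun x => ENNReal.toReal_nonneg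
  -- sandwich bound machinery, for given c > 1, ε > 0
  have key : ∀ c ε : ℝ, 1 < c → 0 < ε →
      ∀ᶠ x in atTop,
        x * T x ≤ (1 - 1/c)⁻¹ * ((c-1) + ε*(c+1)) ∧
        (1 - 1/c)⁻¹ * (((c-1) - ε*(c+1))/c^2) ≤ x * T x := by
    intro c ε hc hε
    have hc0 : (0:ℝ) < c := by linarith
    have hr0 : (0:ℝ) ≤ 1/c := by positivity
    have hr1 : 1/c < 1 := by rw [div_lt_one hc0]; linarith
    -- eventual bounds on V
    have hVev : ∀ᶠ y in atTop, (1-ε)*y ≤ V y ∧ V y ≤ (1+ε)*y := by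
      filter_upwards [hV.eventually_const_lt (by linarith : 1-ε < 1),
        hV.eventually_lt_const (by linarith : (1:ℝ) < 1+ε),
        eventually_gt_atTop (0:ℝ)] with y h1 h2 hy
      constructor
      · exact le_of_lt ((lt_div_iff₀ hy).1 h1)
      · exact le_of_lt ((div_lt_iff₀ hy).1 h2)
    obtain ⟨x0, hx0⟩ := eventually_atTop.1 hVev
    filter_upwards [eventually_ge_atTop (max x0 1), eventually_gt_atTop (0:ℝ)] with x hx hxpos
    have hxx0 : x0 ≤ x := le_trans (le_max_left _ _) hx
    have hx1 : (1:ℝ) ≤ x := le_trans (le_max_right _ _) hx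
    -- per-term bounds
    have hpow_pos : ∀ k : ℕ, (0:ℝ) < c^k * x := fun k => by positivity
    have hpow_ge : ∀ k : ℕ, x ≤ c^k * x := by
      intro k
      nlinarith [one_le_pow₀ hc.le (n := k), hxpos]
    have hVb : ∀ k : ℕ, (1-ε)*(c^k*x) ≤ V (c^k*x) ∧ V (c^k*x) ≤ (1+ε)*(c^k*x) :=
      fun k => hx0 _ (le_trans hxx0 (hpow_ge k))
    have hsucc : ∀ k : ℕ, c^(k+1)*x = c*(c^k*x) := by
      intro k; rw [pow_succ]; ring
    have hterm_up : ∀ k : ℕ, T (c^k*x) - T (c^(k+1)*x) ≤ (1/c)^k * (((c-1) + ε*(c+1))/x) := by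
      intro k
      have h1 := (strip P W hW hWnonneg (c^k*x) (c^(k+1)*x) (hpow_pos k)
        (by rw [hsucc]; nlinarith [hpow_pos k, hc])).1
      have h2 := (hVb k).2
      have h3 := (hVb (k+1)).1
      have hd : V (c^(k+1)*x) - V (c^k*x) ≤ (1+ε)*(c^(k+1)*x) - (1-ε)*(c^k*x) := by
        have := (hVb (k+1)).2
        linarith [(hVb k).1]
      -- (c^k x)^2 * (T_k - T_{k+1}) ≤ c^k x ((c-1)+ε(c+1))
      have h5 : (c^k*x)^2 * (T (c^k*x) - T (c^(k+1)*x))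
          ≤ (c^k*x) * ((c-1) + ε*(c+1)) := by
        have h6 : (1+ε)*(c^(k+1)*x) - (1-ε)*(c^k*x) = (c^k*x) * ((c-1) + ε*(c+1)) := by
          rw [pow_succ]; ring
        linarith
      have h7 : T (c^k*x) - T (c^(k+1)*x) ≤ ((c^k*x) * ((c-1) + ε*(c+1))) / (c^k*x)^2 := by
        rw [le_div_iff₀ (by positivity)]
        nlinarith [h5]
      have h8 : ((c^k*x) * ((c-1) + ε*(c+1))) / (c^k*x)^2
          = (1/c)^k * (((c-1) + ε*(c+1))/x) := by
        have hck : (c:ℝ)^k ≠ 0 := by positivity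
        rw [one_div_pow]
        field_simp
      rw [h8] at h7
      exact h7
    have hterm_lo : ∀ k : ℕ, (1/c)^k * ((((c-1) - ε*(c+1))/c^2)/x) ≤ T (c^k*x) - T (c^(k+1)*x) := by
      intro k
      have h1 := (strip P W hW hWnonneg (c^k*x) (c^(k+1)*x) (hpow_pos k)
        (by rw [hsucc]; nlinarith [hpow_pos k, hc])).2
      have hd : (1-ε)*(c^(k+1)*x) - (1+ε)*(c^k*x) ≤ V (c^(k+1)*x) - V (c^k*x) := by
        linarith [(hVb (k+1)).1, (hVb k).2]
      have h5 : (c^k*x) * ((c-1) - ε*(c+1)) ≤ (c^(k+1)*x)^2 * (T (c^k*x) - T (c^(k+1)*x)) := by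
        have h6 : (1-ε)*(c^(k+1)*x) - (1+ε)*(c^k*x) = (c^k*x) * ((c-1) - ε*(c+1)) := by
          rw [pow_succ]; ring
        linarith
      have h7 : ((c^k*x) * ((c-1) - ε*(c+1))) / (c^(k+1)*x)^2 ≤ T (c^k*x) - T (c^(k+1)*x) := by
        rw [div_le_iff₀ (by positivity)]
        nlinarith [h5]
      have h8 : ((c^k*x) * ((c-1) - ε*(c+1))) / (c^(k+1)*x)^2
          = (1/c)^k * ((((c-1) - ε*(c+1))/c^2)/x) := by
        have hck : (c:ℝ)^k ≠ 0 := by positivity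
        rw [pow_succ]
        rw [one_div_pow]
        field_simp
        ring
      rw [h8] at h7
      exact h7
    -- telescoping
    have htel : ∀ K : ℕ, (∑ k ∈ Finset.range K, (T (c^k*x) - T (c^(k+1)*x)))
        = T x - T (c^K*x) := by
      intro K
      rw [Finset.sum_range_sub' (fun k => T (c^k*x)) K]
      simp
    constructor
    · -- upper bound
      have hKb : ∀ K : ℕ, x * T x ≤ (1 - 1/c)⁻¹ * ((c-1) + ε*(c+1)) + x * T (c^K*x) := by
        intro K
        have hsum : T x - T (c^K*x) ≤ (1 - 1/c)⁻¹ * (((c-1) + ε*(c+1))/x) := by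
          rw [← htel K]
          calc (∑ k ∈ Finset.range K, (T (c^k*x) - T (c^(k+1)*x)))
              ≤ ∑ k ∈ Finset.range K, (1/c)^k * (((c-1) + ε*(c+1))/x) :=
                Finset.sum_le_sum (fun k _ => hterm_up k)
          _ = (∑ k ∈ Finset.range K, (1/c)^k) * (((c-1) + ε*(c+1))/x) := by
                rw [← Finset.sum_mul]
          _ ≤ (1 - 1/c)⁻¹ * (((c-1) + ε*(c+1))/x) := by
                apply mul_le_mul_of_nonneg_right _
                  (div_nonneg (by nlinarith) hxpos.le)
                have hs := Summable.sum_le_tsum (Finset.range K)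
                  (fun k _ => by positivity : ∀ k ∉ Finset.range K, (0:ℝ) ≤ (1/c)^k)
                  (summable_geometric_of_lt_one hr0 hr1)
                rwa [tsum_geometric_of_lt_one hr0 hr1] at hs
        have := mul_le_mul_of_nonneg_left hsum hxpos.le
        have hxne : x ≠ 0 := hxpos.ne'
        rw [mul_sub] at this
        have heq : x * ((1 - 1/c)⁻¹ * (((c-1) + ε*(c+1))/x))
            = (1 - 1/c)⁻¹ * ((c-1) + ε*(c+1)) := by
          have h9 : x * ((1 - 1/c)⁻¹ * (((c-1) + ε*(c+1))/x))
              = (1 - 1/c)⁻¹ * (((c-1) + ε*(c+1)) * (x * x⁻¹)) := by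
            rw [div_eq_mul_inv]; ring
          rw [h9, mul_inv_cancel₀ hxne, mul_one]
        rw [heq] at this
        linarith
      have hlim : Tendsto (fun K : ℕ => (1 - 1/c)⁻¹ * ((c-1) + ε*(c+1)) + x * T (c^K*x))
          atTop (𝓝 ((1 - 1/c)⁻¹ * ((c-1) + ε*(c+1)) + x * 0)) := by
        apply tendsto_const_nhds.add
        apply Tendsto.const_mul
        apply hT0.comp
        exact (tendsto_pow_atTop_atTop_of_one_lt hc).atTop_mul_const hxpos
      rw [mul_zero, add_zero] at hlim
      exact ge_of_tendsto hlim (Filter.Eventually.of_forall hKb)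
    · -- lower bound
      have hKb : ∀ K : ℕ, (∑ k ∈ Finset.range K, (1/c)^k) * (((c-1) - ε*(c+1))/c^2)
          ≤ x * T x := by
        intro K
        have hsum : (∑ k ∈ Finset.range K, (1/c)^k) * ((((c-1) - ε*(c+1))/c^2)/x)
            ≤ T x - T (c^K*x) := by
          rw [← htel K, Finset.sum_mul]
          exact Finset.sum_le_sum (fun k _ => hterm_lo k)
        have h2 : T x - T (c^K*x) ≤ T x := by linarith [hTnn (c^K*x)]
        have h3 := le_trans hsum h2
        have := mul_le_mul_of_nonneg_left h3 hxpos.le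
        have heq : x * ((∑ k ∈ Finset.range K, (1/c)^k) * ((((c-1) - ε*(c+1))/c^2)/x))
            = (∑ k ∈ Finset.range K, (1/c)^k) * (((c-1) - ε*(c+1))/c^2) := by
          field_simp
        rw [heq] at this
        linarith
      have hlim : Tendsto (fun K : ℕ => (∑ k ∈ Finset.range K, (1/c)^k)
          * (((c-1) - ε*(c+1))/c^2)) atTop
          (𝓝 ((1 - 1/c)⁻¹ * (((c-1) - ε*(c+1))/c^2))) :=
        ((hasSum_geometric_of_lt_one hr0 hr1).tendsto_sum_nat).mul_const _
      exact le_of_tendsto hlim (Filter.Eventually.of_forall hKb)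
  -- conclude via order topology
  rw [tendsto_order]
  constructor
  · -- b < 1 → eventually b < x T x
    intro b hb
    set β : ℝ := max b 0 with hβ
    have hβ0 : 0 ≤ β := le_max_right _ _
    have hβ1 : β < 1 := max_lt hb one_pos
    obtain ⟨c, hcdef⟩ : ∃ c : ℝ, c = 2/(1+β) := ⟨_, rfl⟩
    have hc1 : 1 < c := by
      rw [hcdef, lt_div_iff₀ (by linarith)]
      linarith
    have hβc : β*c < 1 := by
      rw [hcdef]
      rw [mul_div_assoc', div_lt_one (by linarith)]
      nlinarith
    obtain ⟨ε, hεdef⟩ : ∃ e : ℝ, e = (c-1)*(1-β*c)/(2*(c+1)) := ⟨_, rfl⟩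
    have hε0 : 0 < ε := by
      rw [hεdef]
      have h1 : 0 < c - 1 := by linarith
      have h2 : 0 < 1 - β*c := by linarith
      positivity
    have hLo : b < (1 - 1/c)⁻¹ * (((c-1) - ε*(c+1))/c^2) := by
      have hc0 : (0:ℝ) < c := by linarith
      have hinv : (1 - 1/c)⁻¹ = c/(c-1) := by
        rw [one_sub_div hc0.ne', inv_div]
      rw [hinv]
      have hεc : ε*(c+1) = (c-1)*(1-β*c)/2 := by
        rw [hεdef]; field_simp
      have hb' : b ≤ β := le_max_left _ _
      have hgoal : β < c/(c-1) * (((c-1) - (c-1)*(1-β*c)/2)/c^2) := by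
        have h1 : c/(c-1) * (((c-1) - (c-1)*(1-β*c)/2)/c^2) = (1+β*c)/(2*c) := by
          have hne1 : c - 1 ≠ 0 := by linarith
          have hne2 : c ≠ 0 := by linarith
          field_simp
          ring
        rw [h1, lt_div_iff₀ (by linarith)]
        nlinarith
      rw [hεc]
      linarith
    filter_upwards [key c ε hc1 hε0] with x hx
    exact lt_of_lt_of_le hLo hx.2
  · -- 1 < b → eventually x T x < b
    intro b hb
    obtain ⟨c, hcdef⟩ : ∃ c : ℝ, c = (1+b)/2 := ⟨_, rfl⟩
    have hc1 : 1 < c := by rw [hcdef]; linarith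
    have hcb : c < b := by rw [hcdef]; linarith
    obtain ⟨ε, hεdef⟩ : ∃ e : ℝ, e = (b-c)*(c-1)/(2*c*(c+1)) := ⟨_, rfl⟩
    have hε0 : 0 < ε := by
      rw [hεdef]
      have h1 : 0 < b - c := by linarith
      have h2 : 0 < c - 1 := by linarith
      have h3 : (0:ℝ) < c := by linarith
      positivity
    have hUp : (1 - 1/c)⁻¹ * ((c-1) + ε*(c+1)) < b := by
      have hc0 : (0:ℝ) < c := by linarith
      have hinv : (1 - 1/c)⁻¹ = c/(c-1) := by
        rw [one_sub_div hc0.ne', inv_div]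
      rw [hinv, hεdef]
      have h1 : c/(c-1) * ((c-1) + (b-c)*(c-1)/(2*c*(c+1))*(c+1)) = c + (b-c)/2 := by
        have hne1 : c - 1 ≠ 0 := by linarith
        have hne2 : c ≠ 0 := by linarith
        have hne3 : c + 1 ≠ 0 := by linarith
        field_simp
      rw [h1]
      linarith
    filter_upwards [key c ε hc1 hε0] with x hx
    exact lt_of_le_of_lt hx.1 hUp

end Tauberian

/-- Let `W ≥ 0` be a random variable whose Laplace transform `χ(λ) = E[e^{-λW}]` satisfies
`χ''(λ) ∼ 1/λ` as `λ → 0+`.  Then `V₂(x) := E[W² 1_{W ≤ x}] ∼ x` as `x → ∞`, and consequently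
`P(W > x) ∼ 1/x` as `x → ∞`. -/
theorem tauberian_tail_of_laplace {Ω : Type*} [MeasurableSpace Ω] (P : Measure Ω)
    [IsProbabilityMeasure P] (W : Ω → ℝ) (hW : Measurable W) (hWnonneg : ∀ ω, 0 ≤ W ω)
    (chi : ℝ → ℝ) (hchi : ∀ l : ℝ, chi l = ∫ ω, Real.exp (-l * W ω) ∂P)
    (hasymp : Tendsto (fun l => l * deriv (deriv chi) l) (𝓝[>] (0 : ℝ)) (𝓝 1)) :
    Tendsto (fun x => (∫ ω, (if W ω ≤ x then (W ω) ^ 2 else 0) ∂P) / x) atTop (𝓝 1) ∧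
    Tendsto (fun x => x * (P {ω | x < W ω}).toReal) atTop (𝓝 1) := by
  have hchi' : chi = fun u => ∫ ω, Real.exp (-(u * W ω)) ∂P := by
    funext u
    rw [hchi u]
    simp only [neg_mul]
  have hdd : ∀ l : ℝ, 0 < l →
      deriv (deriv chi) l = ∫ ω, (W ω)^2 * Real.exp (-(l * W ω)) ∂P := by
    intro l hl
    have hd1 : ∀ u : ℝ, 0 < u →
        deriv chi u = ∫ ω, -(W ω * Real.exp (-(u * W ω))) ∂P := by
      intro u hu
      rw [hchi']
      exact (deriv1 P W hW hWnonneg u hu).deriv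
    have hev : deriv chi =ᶠ[𝓝 l] fun u => ∫ ω, -(W ω * Real.exp (-(u * W ω))) ∂P :=
      eventually_of_mem (Ioi_mem_nhds hl) (fun u hu => hd1 u hu)
    rw [hev.deriv_eq]
    exact (deriv2 P W hW hWnonneg l hl).deriv
  have hg : Tendsto (fun l => l * ∫ ω, (W ω)^2 * Real.exp (-(l * W ω)) ∂P)
      (𝓝[>] (0:ℝ)) (𝓝 1) := by
    apply hasymp.congr'
    filter_upwards [self_mem_nhdsWithin] with l hl
    rw [hdd l hl]
  have hK3 := K3 P W hW hWnonneg hg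
  have hS1 : Tendsto (fun x => (∫ ω, (if W ω ≤ x then (W ω) ^ 2 else 0) ∂P) / x)
      atTop (𝓝 1) := by
    have hinv : Tendsto (fun x : ℝ => x⁻¹) atTop (𝓝[>] (0:ℝ)) := tendsto_inv_atTop_nhdsGT_zero
    have hcomp := hK3.comp hinv
    apply hcomp.congr'
    filter_upwards [eventually_gt_atTop (0:ℝ)] with x hx
    have hxne : x ≠ 0 := hx.ne'
    simp only [Function.comp_apply, one_div, inv_inv]
    rw [div_eq_inv_mul]
  exact ⟨hS1, tail_lim P W hW hWnonneg hS1⟩
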